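/- Let n ≥ 2 and let p_1 < … < p_m be all the distinct prime factors of n. Then in ℚ[x], the greatest common divisor of the polynomials G(n, n/p_1; x), …, G(n, n/p_m; x) is (up to a nonzero constant factor) the n-th cyclotomic polynomial Φ_n(x). -/

import Mathlib

open Polynomial

/-- The fundamental `r`-recurrent polynomial with respect to `n`:
`G(n,r;x) = 1 + x^r + x^{2r} + ⋯ + x^{n-r} = (x^n - 1)/(x^r - 1)`. -/
noncomputable def Gpoly (R : Type*) [Semiring R] (n r : ℕ) : Polynomial R :=
  ∑ l ∈ Finset.range (n / r), X ^ (l * r)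

lemma Gpoly_mul (n p : ℕ) (hp : p.Prime) (hpn : p ∣ n) (hn : 2 ≤ n) :
    Gpoly ℚ n (n / p) * (X ^ (n / p) - 1) = X ^ n - 1 := by
  have hn0 : 0 < n := by omega
  have hdd : n / (n / p) = p := Nat.div_div_self hpn hn0.ne'
  have : Gpoly ℚ n (n / p) = ∑ l ∈ Finset.range p, (X ^ (n / p) : ℚ[X]) ^ l := by
    rw [Gpoly, hdd]
    refine Finset.sum_congr rfl fun l _ => ?_
    rw [← pow_mul, mul_comm]
  rw [this, geom_sum_mul, ← pow_mul, Nat.div_mul_cancel hpn]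

lemma Gpoly_eq_prod (n p : ℕ) (hp : p.Prime) (hpn : p ∣ n) (hn : 2 ≤ n) :
    Gpoly ℚ n (n / p) =
      ∏ d ∈ n.divisors \ (n / p).divisors, cyclotomic d ℚ := by
  have hn0 : 0 < n := by omega
  have hmem : n / p ∈ n.properDivisors := by
    rw [Nat.mem_properDivisors]
    exact ⟨Nat.div_dvd_of_dvd hpn, Nat.div_lt_self hn0 hp.one_lt⟩
  have hkey := X_pow_sub_one_mul_prod_cyclotomic_eq_X_pow_sub_one_of_dvd ℚ (Nat.mem_properDivisors.mp hmem).1 hn0.ne'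
  have hne : (X ^ (n / p) - 1 : ℚ[X]) ≠ 0 := by
    have h1 : 0 < n / p := Nat.div_pos (Nat.le_of_dvd hn0 hpn) hp.pos
    have hm := monic_X_pow_sub_C (1 : ℚ) h1.ne'
    rw [map_one] at hm
    exact hm.ne_zero
  have h2 := Gpoly_mul n p hp hpn hn
  apply mul_left_cancel₀ hne
  rw [mul_comm (X ^ (n / p) - 1 : ℚ[X]), h2, hkey]

theorem stmt_8 (n : ℕ) (hn : 2 ≤ n) :
    Associated
      (Finset.gcd n.primeFactors fun p => Gpoly ℚ n (n / p))
      (cyclotomic n ℚ) := by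
  have hn0 : 0 < n := by omega
  set D := Finset.gcd n.primeFactors fun p => Gpoly ℚ n (n / p) with hD
  -- Φ_n divides each G
  have hdvd1 : cyclotomic n ℚ ∣ D := by
    apply Finset.dvd_gcd
    intro p hp
    rw [Nat.mem_primeFactors] at hp
    rw [Gpoly_eq_prod n p hp.1 hp.2.1 hn]
    apply Finset.dvd_prod_of_mem
    rw [Finset.mem_sdiff, Nat.mem_divisors, Nat.mem_divisors]
    refine ⟨⟨dvd_rfl, hn0.ne'⟩, fun h => ?_⟩
    have := Nat.le_of_dvd (Nat.div_pos (Nat.le_of_dvd hn0 hp.2.1) hp.1.pos) h.1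
    have := Nat.div_lt_self hn0 hp.1.one_lt
    omega
  -- D divides Φ_n
  have hdvd2 : D ∣ cyclotomic n ℚ := by
    obtain ⟨p₀, hp₀⟩ := Nat.nonempty_primeFactors.mpr (show 1 < n by omega)
    have hp₀' := Nat.mem_primeFactors.mp hp₀
    have hDG : D ∣ Gpoly ℚ n (n / p₀) := Finset.gcd_dvd hp₀
    rw [Gpoly_eq_prod n p₀ hp₀'.1 hp₀'.2.1 hn] at hDG
    set T := (n.divisors \ (n / p₀).divisors) with hT
    have hnT : n ∈ T := by
      rw [hT, Finset.mem_sdiff, Nat.mem_divisors, Nat.mem_divisors]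
      refine ⟨⟨dvd_rfl, hn0.ne'⟩, fun h => ?_⟩
      have := Nat.le_of_dvd (Nat.div_pos (Nat.le_of_dvd hn0 hp₀'.2.1) hp₀'.1.pos) h.1
      have := Nat.div_lt_self hn0 hp₀'.1.one_lt
      omega
    rw [← Finset.prod_erase_mul T _ hnT] at hDG
    -- D is coprime to each Φ_d, d ∈ T.erase n
    have hcop : IsCoprime (∏ d ∈ T.erase n, cyclotomic d ℚ) D := by
      apply IsCoprime.prod_left
      intro d hd
      have hdn : d ≠ n := Finset.ne_of_mem_erase hd
      have hdT : d ∈ T := Finset.mem_of_mem_erase hd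
      have hddvd : d ∣ n ∧ d ≠ 0 := by
        have := (Finset.mem_sdiff.mp hdT).1
        rw [Nat.mem_divisors] at this
        exact ⟨this.1, fun h => by subst h; exact hn0.ne' (Nat.eq_zero_of_zero_dvd this.1)⟩
      have hd0 : 0 < d := Nat.pos_of_ne_zero hddvd.2
      rw [Irreducible.coprime_iff_not_dvd (cyclotomic.irreducible_rat hd0)]
      intro hdvd
      -- d is a proper divisor; pick prime q dividing n / d
      have hdlt : d < n := lt_of_le_of_ne (Nat.le_of_dvd hn0 hddvd.1) hdn
      have hnd2 : 2 ≤ n / d := by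
        by_contra hc
        push_neg at hc
        have h1 : n / d ≤ 1 := by omega
        have h2 := Nat.div_mul_cancel hddvd.1
        have h3 : n / d * d ≤ 1 * d := Nat.mul_le_mul_right d h1
        omega
      obtain ⟨q, hq, hqd⟩ := (n / d).exists_prime_and_dvd (by omega)
      have hqn : q ∣ n := hqd.trans (Nat.div_dvd_of_dvd hddvd.1)
      have hqF : q ∈ n.primeFactors := Nat.mem_primeFactors.mpr ⟨hq, hqn, hn0.ne'⟩
      -- d divides n / q
      have hdnq : d ∣ n / q := by
        rw [Nat.dvd_div_iff_mul_dvd hqn, mul_comm]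
        exact (Nat.dvd_div_iff_mul_dvd hddvd.1).mp hqd
      -- Φ_d divides G(q) but G(q) is a product of cyclotomics with index ≠ d
      have hDGq : D ∣ Gpoly ℚ n (n / q) := Finset.gcd_dvd hqF
      have hGq := Gpoly_eq_prod n q hq hqn hn
      have hnotmem : d ∉ n.divisors \ (n / q).divisors := by
        rw [Finset.mem_sdiff, not_and, not_not]
        intro _
        exact Nat.mem_divisors.mpr ⟨hdnq, by
          have : 0 < n / q := Nat.div_pos (Nat.le_of_dvd hn0 hqn) hq.pos
          omega⟩
      have hcop2 : IsCoprime (cyclotomic d ℚ) (Gpoly ℚ n (n / q)) := by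
        rw [hGq]
        apply IsCoprime.prod_right
        intro e he
        exact cyclotomic.isCoprime_rat (fun h => hnotmem (h ▸ he))
      have : IsUnit (cyclotomic d ℚ) :=
        hcop2.isUnit_of_dvd' (dvd_refl _) (dvd_trans (hdvd.trans hDGq) (dvd_refl _))
      exact (cyclotomic.irreducible_rat hd0).not_isUnit this
    exact hcop.symm.dvd_of_dvd_mul_left hDG
  exact associated_of_dvd_dvd hdvd2 hdvd1
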